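/- For all real numbers t and s, the almost complex structure J on 𝔫_{t,s} is integrable: N_J(x,y) = 0 for all x, y ∈ 𝔫_{t,s}. -/

import Mathlib

/-- For all real numbers `t` and `s`, the almost complex structure `J` on `𝔫_{t,s}`
(the real Lie algebra with basis `e₁, …, e₆` whose only nonzero brackets among basis vectors
are `[e₁,e₂] = −t e₅`, `[e₃,e₄] = −2t e₅`, `[e₁,e₃] = −s e₅`, `[e₂,e₄] = s e₅`,
`[e₁,e₄] = −s e₆`, `[e₂,e₃] = −s e₆`), defined by `Je₁ = e₂`, `Je₂ = −e₁`, `Je₃ = e₄`,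
`Je₄ = −e₃`, `Je₅ = e₆`, `Je₆ = −e₅`, is integrable: its Nijenhuis tensor
`N_J(x,y) = [Jx,Jy] − [x,y] − J[Jx,y] − J[x,Jy]` vanishes identically. -/
theorem nts_J_integrable (t s : ℝ)
    (L : Type) [LieRing L] [LieAlgebra ℝ L] (e : Module.Basis (Fin 6) ℝ L)
    (h01 : ⁅e 0, e 1⁆ = (-t) • e 4) (h23 : ⁅e 2, e 3⁆ = (-(2*t)) • e 4)
    (h02 : ⁅e 0, e 2⁆ = (-s) • e 4) (h13 : ⁅e 1, e 3⁆ = s • e 4)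
    (h03 : ⁅e 0, e 3⁆ = (-s) • e 5) (h12 : ⁅e 1, e 2⁆ = (-s) • e 5)
    (h04 : ⁅e 0, e 4⁆ = 0) (h05 : ⁅e 0, e 5⁆ = 0)
    (h14 : ⁅e 1, e 4⁆ = 0) (h15 : ⁅e 1, e 5⁆ = 0)
    (h24 : ⁅e 2, e 4⁆ = 0) (h25 : ⁅e 2, e 5⁆ = 0)
    (h34 : ⁅e 3, e 4⁆ = 0) (h35 : ⁅e 3, e 5⁆ = 0)
    (h45 : ⁅e 4, e 5⁆ = 0)
    (J : L →ₗ[ℝ] L)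
    (hJ0 : J (e 0) = e 1) (hJ1 : J (e 1) = -e 0)
    (hJ2 : J (e 2) = e 3) (hJ3 : J (e 3) = -e 2)
    (hJ4 : J (e 4) = e 5) (hJ5 : J (e 5) = -e 4) :
    ∀ x y : L, ⁅J x, J y⁆ - ⁅x, y⁆ - J ⁅J x, y⁆ - J ⁅x, J y⁆ = 0 := by
  intro x y
  set N : L →ₗ[ℝ] L →ₗ[ℝ] L := LinearMap.mk₂ ℝ
      (fun x y => ⁅J x, J y⁆ - ⁅x, y⁆ - J ⁅J x, y⁆ - J ⁅x, J y⁆)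
      (by intro a b c; simp [add_lie, lie_add, map_add]; abel)
      (by intro c a b; simp [smul_lie, lie_smul, map_smul, smul_sub])
      (by intro a b c; simp [add_lie, lie_add, map_add]; abel)
      (by intro c a b; simp [smul_lie, lie_smul, map_smul, smul_sub]) with hN
  have key : N = 0 := by
    apply (LinearMap.ext_basis e e)
    intro i j
    have skew : ∀ a b : L, ⁅a, b⁆ = -⁅b, a⁆ := fun a b => (lie_skew a b).symm
    fin_cases i <;> fin_cases j <;>
      simp [hN, skew (e 1) (e 0), skew (e 2) (e 0), skew (e 3) (e 0), skew (e 2) (e 1),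
        skew (e 3) (e 1), skew (e 3) (e 2), skew (e 4) (e 0), skew (e 4) (e 1),
        skew (e 4) (e 2), skew (e 4) (e 3), skew (e 5) (e 0), skew (e 5) (e 1),
        skew (e 5) (e 2), skew (e 5) (e 3), skew (e 5) (e 4),
        h01, h23, h02, h13, h03, h12, h04, h05, h14, h15, h24, h25, h34, h35, h45,
        hJ0, hJ1, hJ2, hJ3, hJ4, hJ5, smul_sub, smul_neg, two_mul, smul_smul]
  have h2 := LinearMap.congr_fun (LinearMap.congr_fun key x) y
  simpa [hN] using h2
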